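/- The operator A on L²(0,l₂) ⊕ ℂ defined on pairs (u, β) with u ∈ H²(0,l₂), u(0) = w̄ u(l₂) = β/√(l₁+l₃) (for a fixed unimodular w ∈ ℂ), by A(u,β) = ( (−i d/dx + τ)² u , (1/√(l₁+l₃)) [ −(u'+iτu)(0) + w̄ (u'+iτu)(l₂) + (σt)²β/√(l₁+l₃) ] ) is symmetric: ⟨A(u,β),(v,γ)⟩ = ⟨(u,β),A(v,γ)⟩ for all (u,β),(v,γ) in the domain. -/

import Mathlib

open Real Complex intervalIntegral

/-- Symmetry of the operator `A^hom_τ` of Section 8.1 on `L²(0,l₂) ⊕ ℂ`: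
for pairs `(u,β)`, `(v,γ)` in the domain (quasiperiodicity
`u(0) = w̄ u(l₂) = β/√(l₁+l₃)`), one has `⟨A(u,β),(v,γ)⟩ = ⟨(u,β),A(v,γ)⟩`. -/
theorem Ahom_symmetric (l₁ l₂ l₃ τ t σ : ℝ)
    (hl₁ : 0 < l₁) (hl₂ : 0 < l₂) (hl₃ : 0 < l₃)
    (w : ℂ) (hw : ‖w‖ = 1)
    (u v : ℝ → ℂ) (β γ : ℂ)
    (hu : ContDiff ℝ 2 u) (hv : ContDiff ℝ 2 v)
    (hubc : u 0 = starRingEnd ℂ w * u l₂ ∧ u 0 = β / (Real.sqrt (l₁ + l₃) : ℂ))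
    (hvbc : v 0 = starRingEnd ℂ w * v l₂ ∧ v 0 = γ / (Real.sqrt (l₁ + l₃) : ℂ))
    (A1 : (ℝ → ℂ) → ℝ → ℂ)
    (hA1 : ∀ (f : ℝ → ℂ) (x : ℝ), A1 f x =
      -(deriv (deriv f) x) - 2 * Complex.I * τ * deriv f x + (τ ^ 2 : ℝ) * f x)
    (A2 : (ℝ → ℂ) → ℂ → ℂ)
    (hA2 : ∀ (f : ℝ → ℂ) (b : ℂ), A2 f b =
      (1 / (Real.sqrt (l₁ + l₃) : ℂ)) *
        (-(deriv f 0 + Complex.I * τ * f 0)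
          + starRingEnd ℂ w * (deriv f l₂ + Complex.I * τ * f l₂)
          + ((σ * t) ^ 2 : ℝ) * b / (Real.sqrt (l₁ + l₃) : ℂ))) :
    (∫ x in (0 : ℝ)..l₂, A1 u x * starRingEnd ℂ (v x)) +
        A2 u β * starRingEnd ℂ γ
      = (∫ x in (0 : ℝ)..l₂, u x * starRingEnd ℂ (A1 v x)) +
        β * starRingEnd ℂ (A2 v γ) := by
  obtain ⟨hu1, hu2⟩ := hubc
  obtain ⟨hv1, hv2⟩ := hvbc
  have hsr : (0:ℝ) < Real.sqrt (l₁ + l₃) := Real.sqrt_pos.mpr (by linarith)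
  have hs : (Real.sqrt (l₁ + l₃) : ℂ) ≠ 0 := by
    exact_mod_cast ne_of_gt hsr
  have hwne : w ≠ 0 := by
    intro h; rw [h] at hw; simp at hw
  have hww : w * starRingEnd ℂ w = 1 := by
    rw [Complex.mul_conj, ← Complex.sq_norm, hw]; norm_num
  have hcw : starRingEnd ℂ w = w⁻¹ := (inv_eq_of_mul_eq_one_right hww).symm
  -- regularity
  have h2 : (2 : WithTop ℕ∞) = 1 + 1 := by norm_num
  rw [h2] at hu hv
  have hud : Differentiable ℝ u := hu.differentiable (by norm_num)
  have hvd : Differentiable ℝ v := hv.differentiable (by norm_num)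
  have hu' : ContDiff ℝ 1 (deriv u) := (contDiff_succ_iff_deriv.mp hu).2.2
  have hv' : ContDiff ℝ 1 (deriv v) := (contDiff_succ_iff_deriv.mp hv).2.2
  have hud' : Differentiable ℝ (deriv u) := hu'.differentiable one_ne_zero
  have hvd' : Differentiable ℝ (deriv v) := hv'.differentiable one_ne_zero
  have hcu'' : Continuous (deriv (deriv u)) := (contDiff_one_iff_deriv.mp hu').2
  have hcv'' : Continuous (deriv (deriv v)) := (contDiff_one_iff_deriv.mp hv').2
  have hcu' : Continuous (deriv u) := hu'.continuous
  have hcv' : Continuous (deriv v) := hv'.continuous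
  have hcu : Continuous u := hud.continuous
  have hcv : Continuous v := hvd.continuous
  have hconj : Continuous (starRingEnd ℂ) := Complex.continuous_conj
  -- the Wronskian-type function
  set W : ℝ → ℂ := fun x => -(deriv u x) * starRingEnd ℂ (v x)
      + u x * starRingEnd ℂ (deriv v x)
      - 2 * Complex.I * (τ:ℂ) * (u x * starRingEnd ℂ (v x)) with hWdef
  have hA1c : Continuous (fun x => A1 u x) := by
    have : (fun x => A1 u x) = fun x =>
        -(deriv (deriv u) x) - 2 * Complex.I * τ * deriv u x + (τ ^ 2 : ℝ) * u x := by
      funext x; exact hA1 u x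
    rw [this]; fun_prop
  have hA1cv : Continuous (fun x => A1 v x) := by
    have : (fun x => A1 v x) = fun x =>
        -(deriv (deriv v) x) - 2 * Complex.I * τ * deriv v x + (τ ^ 2 : ℝ) * v x := by
      funext x; exact hA1 v x
    rw [this]; fun_prop
  have hF1c : Continuous (fun x => A1 u x * starRingEnd ℂ (v x)) := by fun_prop
  have hF2c : Continuous (fun x => u x * starRingEnd ℂ (A1 v x)) := by fun_prop
  have hint1 : IntervalIntegrable (fun x => A1 u x * starRingEnd ℂ (v x))
      MeasureTheory.volume 0 l₂ := hF1c.intervalIntegrable _ _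
  have hint2 : IntervalIntegrable (fun x => u x * starRingEnd ℂ (A1 v x))
      MeasureTheory.volume 0 l₂ := hF2c.intervalIntegrable _ _
  -- derivative of W
  have hWd : ∀ x ∈ Set.uIcc (0:ℝ) l₂, HasDerivAt W
      (A1 u x * starRingEnd ℂ (v x) - u x * starRingEnd ℂ (A1 v x)) x := by
    intro x _
    have h1 : HasDerivAt u (deriv u x) x := (hud x).hasDerivAt
    have h2 : HasDerivAt (deriv u) (deriv (deriv u) x) x := (hud' x).hasDerivAt
    have h3 : HasDerivAt (fun y => starRingEnd ℂ (v y)) (starRingEnd ℂ (deriv v x)) x :=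
      ((hvd x).hasDerivAt).star
    have h4 : HasDerivAt (fun y => starRingEnd ℂ (deriv v y))
        (starRingEnd ℂ (deriv (deriv v) x)) x := ((hvd' x).hasDerivAt).star
    have hD := ((h2.neg.mul h3).add (h1.mul h4)).sub
      (((h1.mul h3)).const_mul (2 * Complex.I * (τ:ℂ)))
    refine hD.congr_deriv ?_
    simp only [hA1, map_add, map_sub, map_mul, map_neg, Complex.conj_I,
      Complex.conj_ofReal, map_ofNat, map_pow, Pi.neg_apply]
    push_cast
    ring
  have key : (∫ x in (0:ℝ)..l₂,
      (A1 u x * starRingEnd ℂ (v x) - u x * starRingEnd ℂ (A1 v x))) = W l₂ - W 0 := by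
    apply intervalIntegral.integral_eq_sub_of_hasDerivAt hWd
    exact (hint1.sub hint2)
  have split : (∫ x in (0:ℝ)..l₂,
      (A1 u x * starRingEnd ℂ (v x) - u x * starRingEnd ℂ (A1 v x)))
      = (∫ x in (0:ℝ)..l₂, A1 u x * starRingEnd ℂ (v x))
        - (∫ x in (0:ℝ)..l₂, u x * starRingEnd ℂ (A1 v x)) :=
    intervalIntegral.integral_sub hint1 hint2
  -- boundary algebra
  have hβ : β = u 0 * (Real.sqrt (l₁ + l₃) : ℂ) := by
    rw [hu2, div_mul_cancel₀ _ hs]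
  have hγ : γ = v 0 * (Real.sqrt (l₁ + l₃) : ℂ) := by
    rw [hv2, div_mul_cancel₀ _ hs]
  have hul : u l₂ = w * u 0 := by
    rw [hu1, ← mul_assoc, hww, one_mul]
  have hvl : v l₂ = w * v 0 := by
    rw [hv1, ← mul_assoc, hww, one_mul]
  have hB : A2 u β * starRingEnd ℂ γ - β * starRingEnd ℂ (A2 v γ) = W 0 - W l₂ := by
    simp only [hA2, hWdef, hβ, hγ, hul, hvl, map_add, map_sub, map_mul, map_neg,
      map_div₀, map_one, map_inv₀, inv_inv, Complex.conj_I, Complex.conj_ofReal, map_ofNat, map_pow, hcw]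
    field_simp
    ring
  linear_combination key - split + hB
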